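/- The Parseval identity for F(x) = 1/cos(x/4) on [-π, π] reads: (1/π) ∫_{-π}^{π} dt/cos²(t/4) = a_0²/2 + ∑_{n=1}^{∞} a_n², where a_n = (8/π) ∫_0^{π/4} cos(4nt)/cos(t) dt; in particular the series ∑_{n=1}^{∞} a_n² converges and equals 8/π - 32 ln²(1+√2)/π². -/

import Mathlib

open Real

/-- The Fourier cosine coefficients of F(x) = 1/cos(x/4) on [-π, π]. -/
noncomputable def fourierA (n : ℕ) : ℝ :=
  (8 / π) * ∫ t in (0:ℝ)..(π / 4), Real.cos (4 * n * t) / Real.cos t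

open MeasureTheory intervalIntegral

noncomputable def Gp (x : ℝ) : ℝ :=
  1 / Real.sqrt ((1 + Real.sqrt ((1 + Real.cos x) / 2)) / 2)

lemma Gp_denom_pos (x : ℝ) : 0 < Real.sqrt ((1 + Real.sqrt ((1 + Real.cos x) / 2)) / 2) := by
  have h1 : (0:ℝ) ≤ Real.sqrt ((1 + Real.cos x) / 2) := Real.sqrt_nonneg _
  apply Real.sqrt_pos.mpr; linarith

lemma Gp_cont : Continuous Gp := by
  apply Continuous.div continuous_const
  · fun_prop
  · exact fun x => (Gp_denom_pos x).ne'

lemma Gp_eq {x : ℝ} (h1 : -π ≤ x) (h2 : x ≤ π) : Gp x = 1 / Real.cos (x / 4) := by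
  have hpi := Real.pi_pos
  have e2 : Real.cos (x / 2) = Real.sqrt ((1 + Real.cos x) / 2) := Real.cos_half h1 h2
  have e4 : Real.cos (x / 2 / 2) = Real.sqrt ((1 + Real.cos (x / 2)) / 2) :=
    Real.cos_half (by linarith) (by linarith)
  have hx : x / 2 / 2 = x / 4 := by ring
  rw [Gp, ← e2, ← hx, ← e4]

lemma Gp_even (x : ℝ) : Gp (-x) = Gp x := by simp [Gp]

lemma Gp_periodic : Function.Periodic Gp (2 * π) := fun x => by
  simp [Gp, Real.cos_add_two_pi]

instance : Fact (0 < 2 * π) := ⟨Real.two_pi_pos⟩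

lemma Gpc_periodic : Function.Periodic (fun x => (Gp x : ℂ)) (2 * π) := fun x => by
  simp [Gp_periodic x]

noncomputable def fG : AddCircle (2 * π) → ℂ := Gpc_periodic.lift

lemma fG_coe (x : ℝ) : fG (x : AddCircle (2 * π)) = (Gp x : ℂ) := rfl

lemma fG_cont : Continuous fG :=
  continuous_coinduced_dom.mpr (Complex.continuous_ofReal.comp Gp_cont)

lemma sin_int_zero (n : ℤ) :
    (∫ x in (-π)..π, Gp x * Real.sin (n * x)) = 0 := by
  have h : (∫ x in (-π)..π, Gp (-x) * Real.sin (n * (-x)))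
      = ∫ x in (-π)..π, Gp x * Real.sin (n * x) := by
    rw [intervalIntegral.integral_comp_neg (fun x => Gp x * Real.sin (n * x))]
    norm_num
  have h2 : (∫ x in (-π)..π, Gp (-x) * Real.sin (n * (-x)))
      = -∫ x in (-π)..π, Gp x * Real.sin (n * x) := by
    rw [← intervalIntegral.integral_neg]
    apply intervalIntegral.integral_congr
    intro x _
    simp [Gp_even, mul_comm]
  linarith [h, h2]

lemma cos_int_even (n : ℤ) :
    (∫ x in (-π)..π, Gp x * Real.cos (n * x))
      = 2 * ∫ x in (0:ℝ)..π, Gp x * Real.cos (n * x) := by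
  have hi : ∀ a b : ℝ, IntervalIntegrable (fun x => Gp x * Real.cos (n * x)) volume a b :=
    fun a b => (Gp_cont.mul (by fun_prop)).intervalIntegrable a b
  have split : (∫ x in (-π)..π, Gp x * Real.cos (n * x))
      = (∫ x in (-π)..(0:ℝ), Gp x * Real.cos (n * x))
        + ∫ x in (0:ℝ)..π, Gp x * Real.cos (n * x) :=
    (intervalIntegral.integral_add_adjacent_intervals (hi _ _) (hi _ _)).symm
  have hrefl : (∫ x in (-π)..(0:ℝ), Gp x * Real.cos (n * x))
      = ∫ x in (0:ℝ)..π, Gp x * Real.cos (n * x) := by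
    have h := intervalIntegral.integral_comp_neg (a := (0:ℝ)) (b := π)
      (fun x => Gp x * Real.cos (n * x))
    rw [neg_zero] at h
    rw [← h]
    apply intervalIntegral.integral_congr
    intro x _
    simp only [Gp_even, mul_neg, Real.cos_neg]
  rw [split, hrefl]; ring

lemma integrand_eq (n : ℤ) (x : ℝ) :
    fourier (-n) (x : AddCircle (2 * π)) • fG (x : AddCircle (2 * π))
      = (↑(Gp x * Real.cos (n * x)) : ℂ) - (↑(Gp x * Real.sin (n * x)) : ℂ) * Complex.I := by
  rw [fourier_coe_apply, fG_coe, smul_eq_mul]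
  have harg : 2 * (π:ℂ) * Complex.I * (-n : ℤ) * (x:ℝ) / ((2 * π : ℝ) : ℂ)
      = ((-((n:ℝ) * x) : ℝ) : ℂ) * Complex.I := by
    have hπ : (π:ℂ) ≠ 0 := Complex.ofReal_ne_zero.mpr Real.pi_ne_zero
    push_cast
    field_simp
  rw [harg, Complex.exp_mul_I, ← Complex.ofReal_cos, ← Complex.ofReal_sin,
    Real.cos_neg, Real.sin_neg]
  push_cast
  ring

lemma coeff_eq_real (n : ℤ) :
    fourierCoeff fG n
      = ((1 / (2 * π) * ∫ x in (-π)..π, Gp x * Real.cos (n * x) : ℝ) : ℂ) := by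
  rw [fourierCoeff_eq_intervalIntegral fG n (-π), show -π + 2 * π = π by ring]
  have hint : (∫ x in (-π)..π, fourier (-n) (x : AddCircle (2 * π)) • fG (x : AddCircle (2 * π)))
      = ((∫ x in (-π)..π, Gp x * Real.cos (n * x) : ℝ) : ℂ)
        - ((∫ x in (-π)..π, Gp x * Real.sin (n * x) : ℝ) : ℂ) * Complex.I := by
    rw [← intervalIntegral.integral_ofReal, ← intervalIntegral.integral_ofReal,
      ← intervalIntegral.integral_mul_const, ← intervalIntegral.integral_sub]
    · exact intervalIntegral.integral_congr fun x _ => integrand_eq n x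
    · exact ((Complex.continuous_ofReal.comp (Gp_cont.mul (by fun_prop))).intervalIntegrable _ _)
    · exact (((Complex.continuous_ofReal.comp (Gp_cont.mul (by fun_prop))).mul
        continuous_const).intervalIntegrable _ _)
  rw [hint, sin_int_zero, Complex.ofReal_zero, zero_mul, sub_zero, Complex.real_smul]
  push_cast
  ring

lemma cos_natAbs_mul (n : ℤ) (y : ℝ) :
    Real.cos ((n : ℝ) * y) = Real.cos ((n.natAbs : ℝ) * y) := by
  rw [Nat.cast_natAbs, Int.cast_abs]
  rcases abs_cases (n : ℝ) with ⟨h, _⟩ | ⟨h, _⟩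
  · rw [h]
  · rw [h, neg_mul, Real.cos_neg]

lemma int_zero_pi (n : ℤ) :
    (∫ x in (0:ℝ)..π, Gp x * Real.cos (n * x))
      = 4 * ∫ t in (0:ℝ)..(π/4), Real.cos (4 * (n.natAbs : ℝ) * t) / Real.cos t := by
  have hpi := Real.pi_pos
  have h := intervalIntegral.smul_integral_comp_mul_left
    (a := (0:ℝ)) (b := π/4) (fun x => Gp x * Real.cos (n * x)) 4
  rw [mul_zero, show (4:ℝ) * (π/4) = π by ring] at h
  rw [← h, smul_eq_mul]
  congr 1
  apply intervalIntegral.integral_congr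
  intro t ht
  rw [Set.uIcc_of_le (by positivity)] at ht
  obtain ⟨ht0, ht1⟩ := ht
  have e1 : Gp (4 * t) = 1 / Real.cos t := by
    rw [Gp_eq (by linarith) (by linarith), show 4 * t / 4 = t by ring]
  have e2 : (n : ℝ) * (4 * t) = (n : ℝ) * (4 * t) := rfl
  simp only [e1]
  rw [show (n:ℝ) * (4*t) = (n:ℝ) * (4*t) from rfl]
  rw [show ((n:ℝ) * (4 * t)) = ((n:ℝ) * (4 * t)) from rfl]
  have : Real.cos ((n:ℝ) * (4 * t)) = Real.cos (4 * (n.natAbs : ℝ) * t) := by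
    rw [show (n:ℝ) * (4 * t) = (n:ℝ) * (4 * t) from rfl, cos_natAbs_mul n (4 * t)]
    ring_nf
  rw [this]
  ring

lemma coeff_eq_A (n : ℤ) :
    fourierCoeff fG n = ((fourierA n.natAbs / 2 : ℝ) : ℂ) := by
  rw [coeff_eq_real, cos_int_even, int_zero_pi]
  norm_num [fourierA]
  have hπ : (π : ℂ) ≠ 0 := Complex.ofReal_ne_zero.mpr Real.pi_ne_zero
  field_simp
  ring

open AddCircle in
noncomputable def fLp : Lp ℂ 2 (@haarAddCircle (2*π) _) :=
  ContinuousMap.toLp (E := ℂ) 2 haarAddCircle ℂ ⟨fG, fG_cont⟩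

open AddCircle in
lemma coeff_fLp (i : ℤ) : fourierCoeff (fLp : AddCircle (2*π) → ℂ) i = fourierCoeff fG i :=
  fourierCoeff_toLp ⟨fG, fG_cont⟩ i

lemma norm_fG_sq (x : ℝ) : ‖fG (x : AddCircle (2*π))‖ ^ 2 = Gp x ^ 2 := by
  rw [fG_coe, Complex.norm_real, Real.norm_eq_abs, sq_abs]

open AddCircle in
lemma summable_Z : Summable (fun i : ℤ => ‖fourierCoeff fG i‖ ^ 2) := by
  have hm : Memℓp (fun i => fourierBasis.repr fLp i) 2 := lp.memℓp (fourierBasis.repr fLp)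
  have hs := (memℓp_gen_iff (p := 2) (by norm_num)).mp hm
  refine hs.congr fun i => ?_
  rw [fourierBasis_repr, coeff_fLp]
  norm_num [Real.rpow_two]

open AddCircle in
lemma parseval_fG :
    ∑' i : ℤ, ‖fourierCoeff fG i‖ ^ 2
      = 1 / (2 * π) * ∫ x in (-π)..π, Gp x ^ 2 := by
  have hps := tsum_sq_fourierCoeff fLp
  have hcoeff : (∑' i : ℤ, ‖fourierCoeff (fLp : AddCircle (2*π) → ℂ) i‖ ^ 2)
      = ∑' i : ℤ, ‖fourierCoeff fG i‖ ^ 2 := by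
    congr 1; funext i; rw [coeff_fLp]
  rw [hcoeff] at hps
  have hae : (∫ t : AddCircle (2*π), ‖(fLp : AddCircle (2*π) → ℂ) t‖ ^ 2 ∂haarAddCircle)
      = ∫ t : AddCircle (2*π), ‖fG t‖ ^ 2 ∂haarAddCircle := by
    apply MeasureTheory.integral_congr_ae
    filter_upwards [ContinuousMap.coeFn_toLp (p := 2) (μ := haarAddCircle) (𝕜 := ℂ)
      (⟨fG, fG_cont⟩ : C(AddCircle (2*π), ℂ))] with t ht
    simp only [fLp]
    rw [ht]; rfl
  rw [hae] at hps
  set g : AddCircle (2*π) → ℂ := fun t => ((‖fG t‖ ^ 2 : ℝ) : ℂ) with hg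
  have h1 : fourierCoeff g 0 = ((∫ t : AddCircle (2*π), ‖fG t‖ ^ 2 ∂haarAddCircle : ℝ) : ℂ) := by
    rw [fourierCoeff]
    simp only [neg_zero, fourier_zero, one_smul, hg]
    exact integral_ofReal
  have h2 : fourierCoeff g 0
      = ((1 / (2 * π) * ∫ x in (-π)..π, Gp x ^ 2 : ℝ) : ℂ) := by
    rw [fourierCoeff_eq_intervalIntegral g 0 (-π), show -π + 2 * π = π by ring]
    simp only [neg_zero, fourier_zero, one_smul, hg]
    have he : (∫ x in (-π)..π, ((‖fG (x : AddCircle (2*π))‖ ^ 2 : ℝ) : ℂ))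
        = ∫ x in (-π)..π, ((Gp x ^ 2 : ℝ) : ℂ) :=
      intervalIntegral.integral_congr fun x _ => by rw [norm_fG_sq]
    rw [he, intervalIntegral.integral_ofReal, Complex.real_smul]
    push_cast
    ring
  rw [hps, ← Complex.ofReal_inj, ← h1, h2]

lemma cos_quarter_pos {t : ℝ} (ht : t ∈ Set.uIcc (-π) π) : 0 < Real.cos (t / 4) := by
  have hpi := Real.pi_pos
  rw [Set.uIcc_of_le (by linarith)] at ht
  obtain ⟨h1, h2⟩ := ht
  exact Real.cos_pos_of_mem_Ioo ⟨by linarith, by linarith⟩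

lemma integral_sec_sq : (∫ t in (-π)..π, 1 / Real.cos (t / 4) ^ 2) = 8 := by
  have hpi := Real.pi_pos
  have hder : ∀ t ∈ Set.uIcc (-π) π,
      HasDerivAt (fun y => 4 * Real.tan (y / 4)) (1 / Real.cos (t / 4) ^ 2) t := by
    intro t ht
    have hc : Real.cos (t / 4) ≠ 0 := (cos_quarter_pos ht).ne'
    have h1 : HasDerivAt (fun y : ℝ => y / 4) (1 / 4) t := by
      simpa using (hasDerivAt_id t).div_const 4
    have h2 := (Real.hasDerivAt_tan hc).comp t h1
    have h3 := h2.const_mul (4 : ℝ)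
    convert h3 using 1
    · rfl
    · rfl
    · rfl
    · ring
  have hint : IntervalIntegrable (fun t => 1 / Real.cos (t / 4) ^ 2) volume (-π) π := by
    apply ContinuousOn.intervalIntegrable
    apply ContinuousOn.div continuousOn_const
    · fun_prop
    · exact fun t ht => pow_ne_zero _ (cos_quarter_pos ht).ne'
  rw [intervalIntegral.integral_eq_sub_of_hasDerivAt hder hint]
  rw [show -π / 4 = -(π / 4) by ring, Real.tan_neg, Real.tan_pi_div_four]
  norm_num

lemma integral_sec : (∫ t in (0:ℝ)..(π / 4), 1 / Real.cos t) = Real.log (1 + Real.sqrt 2) := by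
  have hpi := Real.pi_pos
  have hmem : ∀ t ∈ Set.uIcc (0:ℝ) (π / 4), 0 < Real.cos t ∧ 0 ≤ Real.sin t := by
    intro t ht
    rw [Set.uIcc_of_le (by linarith)] at ht
    obtain ⟨h1, h2⟩ := ht
    exact ⟨Real.cos_pos_of_mem_Ioo ⟨by linarith, by linarith⟩,
      Real.sin_nonneg_of_nonneg_of_le_pi h1 (by linarith)⟩
  have hder : ∀ t ∈ Set.uIcc (0:ℝ) (π / 4),
      HasDerivAt (fun y => Real.log ((1 + Real.sin y) / Real.cos y)) (1 / Real.cos t) t := by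
    intro t ht
    obtain ⟨hc, hs⟩ := hmem t ht
    have hu : HasDerivAt (fun y => (1 + Real.sin y) / Real.cos y)
        ((Real.cos t * Real.cos t - (1 + Real.sin t) * (-Real.sin t)) / Real.cos t ^ 2) t :=
      ((Real.hasDerivAt_sin t).const_add 1).div (Real.hasDerivAt_cos t) hc.ne'
    have hne : (1 + Real.sin t) / Real.cos t ≠ 0 := by positivity
    have h2 := hu.log hne
    convert h2 using 1
    have hsq := Real.sin_sq_add_cos_sq t
    field_simp
    nlinarith [hc, hsq]
  have hint : IntervalIntegrable (fun t => 1 / Real.cos t) volume 0 (π / 4) := by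
    apply ContinuousOn.intervalIntegrable
    apply ContinuousOn.div continuousOn_const Real.continuous_cos.continuousOn
    exact fun t ht => (hmem t ht).1.ne'
  rw [intervalIntegral.integral_eq_sub_of_hasDerivAt hder hint]
  rw [Real.sin_pi_div_four, Real.cos_pi_div_four, Real.sin_zero, Real.cos_zero]
  have h2 : Real.sqrt 2 > 0 := by positivity
  have hsq : Real.sqrt 2 ^ 2 = 2 := Real.sq_sqrt (by norm_num)
  have hval : (1 + Real.sqrt 2 / 2) / (Real.sqrt 2 / 2) = 1 + Real.sqrt 2 := by
    rw [div_eq_iff (by positivity)]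
    nlinarith
  rw [hval]
  norm_num

lemma a0_val : fourierA 0 = 8 / π * Real.log (1 + Real.sqrt 2) := by
  rw [fourierA, ← integral_sec]
  congr 1
  apply intervalIntegral.integral_congr
  intro t _
  norm_num

lemma term_eq (i : ℤ) : ‖fourierCoeff fG i‖ ^ 2 = (fourierA i.natAbs / 2) ^ 2 := by
  rw [coeff_eq_A, Complex.norm_real, Real.norm_eq_abs, sq_abs]

/-- Parseval's identity for F(x) = 1/cos(x/4) on [-π, π]:
(1/π) ∫_{-π}^{π} dt/cos²(t/4) = a₀²/2 + ∑_{n=1}^∞ aₙ²; in particular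
the series ∑_{n=1}^∞ aₙ² converges and equals 8/π - 32 ln²(1+√2)/π². -/
theorem parseval_inv_cos_quarter :
    Summable (fun n : ℕ => fourierA (n + 1) ^ 2) ∧
    (1 / π) * ∫ t in (-π)..π, 1 / Real.cos (t / 4) ^ 2
      = fourierA 0 ^ 2 / 2 + ∑' n : ℕ, fourierA (n + 1) ^ 2 ∧
    ∑' n : ℕ, fourierA (n + 1) ^ 2
      = 8 / π - 32 * Real.log (1 + Real.sqrt 2) ^ 2 / π ^ 2 := by
  have hpi := Real.pi_pos
  set F : ℤ → ℝ := fun i => (fourierA i.natAbs / 2) ^ 2 with hFdef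
  have hF : Summable F := summable_Z.congr term_eq
  have hinj1 : Function.Injective (fun n : ℕ => ((n : ℤ) + 1)) := fun a b h => by
    simpa using h
  have hinj2 : Function.Injective (fun n : ℕ => (-((n : ℤ) + 1))) := fun a b h => by
    simpa using h
  have hs1 : Summable (fun n : ℕ => F ((n : ℤ) + 1)) := hF.comp_injective hinj1
  have hs2 : Summable (fun n : ℕ => F (-((n : ℤ) + 1))) := hF.comp_injective hinj2
  have hnat1 : ∀ n : ℕ, F ((n : ℤ) + 1) = fourierA (n + 1) ^ 2 / 4 := by
    intro n
    rw [hFdef]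
    simp only
    rw [show ((n : ℤ) + 1).natAbs = n + 1 by omega]
    ring
  have hnat2 : ∀ n : ℕ, F (-((n : ℤ) + 1)) = fourierA (n + 1) ^ 2 / 4 := by
    intro n
    rw [hFdef]
    simp only
    rw [show (-((n : ℤ) + 1)).natAbs = n + 1 by omega]
    ring
  have hsummable : Summable (fun n : ℕ => fourierA (n + 1) ^ 2) := by
    refine (hs1.mul_left 4).congr (fun n => ?_)
    rw [hnat1]; ring
  set S := ∑' n : ℕ, fourierA (n + 1) ^ 2 with hSdef
  have hZsplit : ∑' i : ℤ, F i = S / 4 + (fourierA 0 / 2) ^ 2 + S / 4 := by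
    rw [tsum_of_add_one_of_neg_add_one hs1 hs2]
    have e1 : ∑' n : ℕ, F ((n : ℤ) + 1) = S / 4 := by
      rw [show S / 4 = ∑' n : ℕ, fourierA (n + 1) ^ 2 / 4 from (tsum_div_const ..).symm]
      exact tsum_congr hnat1
    have e2 : ∑' n : ℕ, F (-((n : ℤ) + 1)) = S / 4 := by
      rw [show S / 4 = ∑' n : ℕ, fourierA (n + 1) ^ 2 / 4 from (tsum_div_const ..).symm]
      exact tsum_congr hnat2
    rw [e1, e2]
    norm_num [hFdef]
  have hparseval : ∑' i : ℤ, F i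
      = 1 / (2 * π) * ∫ t in (-π)..π, 1 / Real.cos (t / 4) ^ 2 := by
    rw [← tsum_congr term_eq, parseval_fG]
    congr 1
    apply intervalIntegral.integral_congr
    intro t ht
    rw [Set.uIcc_of_le (by linarith)] at ht
    simp only
    rw [Gp_eq ht.1 ht.2, div_pow, one_pow]
  have key : 1 / (2 * π) * (∫ t in (-π)..π, 1 / Real.cos (t / 4) ^ 2)
      = S / 2 + fourierA 0 ^ 2 / 4 := by
    rw [← hparseval, hZsplit]; ring
  have main : (1 / π) * ∫ t in (-π)..π, 1 / Real.cos (t / 4) ^ 2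
      = fourierA 0 ^ 2 / 2 + S := by
    have := key
    field_simp at this ⊢
    linarith
  refine ⟨hsummable, main, ?_⟩
  have hSval : S = (1 / π) * 8 - fourierA 0 ^ 2 / 2 := by
    rw [← integral_sec_sq]
    linarith [main]
  rw [hSval, a0_val]
  field_simp
  ring
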